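/- Let n ≥ 2 be an integer, x_k = cos(kπ/n) for 1 ≤ k ≤ n−1, f₁(x) = T_n(x) + 2 − ((x+2)/n²)·T_n′(x) and f₃(x) = (1/n²)·(1−x)·(n² − T_n′(x)). Then f₁′(x_k) = (−1)^k·(x_k+2)/(1−x_k²) and f₃′(x_k) = (−1)^k/(1+x_k) − 1, and with 𝓛_k(f;x) := (1 − x_k·x)·f(x_k) + (1 − x_k²)·(x − x_k)·f′(x_k): 𝓛_k(f₁;x) = (1−x_k)·(3+2x+x_k) if k is even and 𝓛_k(f₁;x) = (1+x_k)·(1+x_k−2x) if k is odd; 𝓛_k(f₃;x) = (1−x_k)·(1+x_k²−2x_k·x) if k is even and 𝓛_k(f₃;x) = (1−x_k²)·(1+x_k−2x) if k is odd. -/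

import Mathlib

open Polynomial Real

/-- The `n`-th Chebyshev polynomial of the first kind, as a real polynomial. -/
noncomputable def chebT (n : ℕ) : Polynomial ℝ := Polynomial.Chebyshev.T ℝ (n : ℤ)

/-- `f₁(x) = T_n(x) + 2 - ((x+2)/n²) T_n'(x)`. -/
noncomputable def f₁ (n : ℕ) (x : ℝ) : ℝ :=
  (chebT n).eval x + 2 - (x + 2) / (n : ℝ) ^ 2 * (derivative (chebT n)).eval x

/-- `f₃(x) = (1/n²)(1-x)(n² - T_n'(x))`. -/
noncomputable def f₃ (n : ℕ) (x : ℝ) : ℝ :=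
  1 / (n : ℝ) ^ 2 * (1 - x) * ((n : ℝ) ^ 2 - (derivative (chebT n)).eval x)

/-- `𝓛(c, f; x) = (1 - c x) f(c) + (1 - c²)(x - c) f'(c)`. -/
noncomputable def Lfun (c : ℝ) (f : ℝ → ℝ) (x : ℝ) : ℝ :=
  (1 - c * x) * f c + (1 - c ^ 2) * (x - c) * deriv f c

/-- Values of `f₁'`, `f₃'` and of `𝓛_k(f₁;·)`, `𝓛_k(f₃;·)` at the zeros
`x_k = cos(kπ/n)` of `T_n'`. -/
theorem L_of_f1_f3 (n : ℕ) (hn : 2 ≤ n) (k : ℕ) (hk1 : 1 ≤ k) (hk2 : k ≤ n - 1) :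
    deriv (f₁ n) (Real.cos (k * π / n)) =
      (-1 : ℝ) ^ k * (Real.cos (k * π / n) + 2) / (1 - Real.cos (k * π / n) ^ 2) ∧
    deriv (f₃ n) (Real.cos (k * π / n)) =
      (-1 : ℝ) ^ k / (1 + Real.cos (k * π / n)) - 1 ∧
    (∀ x : ℝ, Even k →
      Lfun (Real.cos (k * π / n)) (f₁ n) x =
        (1 - Real.cos (k * π / n)) * (3 + 2 * x + Real.cos (k * π / n)) ∧
      Lfun (Real.cos (k * π / n)) (f₃ n) x =
        (1 - Real.cos (k * π / n)) * (1 + Real.cos (k * π / n) ^ 2 - 2 * Real.cos (k * π / n) * x)) ∧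
    (∀ x : ℝ, Odd k →
      Lfun (Real.cos (k * π / n)) (f₁ n) x =
        (1 + Real.cos (k * π / n)) * (1 + Real.cos (k * π / n) - 2 * x) ∧
      Lfun (Real.cos (k * π / n)) (f₃ n) x =
        (1 - Real.cos (k * π / n) ^ 2) * (1 + Real.cos (k * π / n) - 2 * x)) := by
  have hnpos : 0 < (n : ℝ) := by exact_mod_cast (by omega : 0 < n)
  have hn0 : (n : ℝ) ≠ 0 := ne_of_gt hnpos
  set θ : ℝ := (k : ℝ) * π / n with hθdef
  have hnθ : (n : ℝ) * θ = (k : ℝ) * π := by rw [hθdef, mul_div_assoc']; exact mul_div_cancel_left₀ _ hn0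
  have hθpos : 0 < θ := by
    have : (0:ℝ) < (k:ℝ) := by exact_mod_cast hk1
    have := Real.pi_pos
    positivity
  have hθlt : θ < π := by
    rw [hθdef, div_lt_iff₀ hnpos]
    have hkn : (k : ℝ) < (n : ℝ) := by exact_mod_cast (by omega : k < n)
    nlinarith [Real.pi_pos]
  have hsin : 0 < Real.sin θ := Real.sin_pos_of_pos_of_lt_pi hθpos hθlt
  set c : ℝ := Real.cos θ with hcdef
  have hc2 : 1 - c ^ 2 = Real.sin θ ^ 2 := by
    rw [hcdef]; have := Real.sin_sq_add_cos_sq θ; linarith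
  have hc2pos : 0 < 1 - c ^ 2 := by rw [hc2]; positivity
  have hc2ne : 1 - c ^ 2 ≠ 0 := ne_of_gt hc2pos
  have hcm1 : (0:ℝ) < 1 + c := by nlinarith
  have hcm1ne : (1:ℝ) + c ≠ 0 := ne_of_gt hcm1
  have hcoskpi : Real.cos ((k : ℝ) * π) = (-1 : ℝ) ^ k := by
    have := Real.cos_nat_mul_pi_sub 0 k
    simpa using this
  have hT : (chebT n).eval c = (-1 : ℝ) ^ k := by
    rw [hcdef, chebT, Polynomial.Chebyshev.T_real_cos]
    rw [show ((n : ℤ) : ℝ) * θ = (n : ℝ) * θ by push_cast; ring, hnθ, hcoskpi]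
  have hU : (Polynomial.Chebyshev.U ℝ ((n : ℤ) - 1)).eval c = 0 := by
    have h := Polynomial.Chebyshev.U_real_cos θ ((n : ℤ) - 1)
    have h2 : ((((n : ℤ) - 1 : ℤ) : ℝ) + 1) * θ = (k : ℝ) * π := by
      push_cast; rw [← hnθ]; ring
    rw [h2, Real.sin_nat_mul_pi] at h
    exact (mul_eq_zero.mp h).resolve_right (ne_of_gt hsin)
  have hdT : derivative (chebT n) = ((n : ℤ) : ℝ[X]) * Polynomial.Chebyshev.U ℝ ((n : ℤ) - 1) :=
    Polynomial.Chebyshev.T_derivative_eq_U (n : ℤ)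
  have hp1 : (derivative (chebT n)).eval c = 0 := by
    rw [hdT]; simp [hU]
  have hU' : (derivative (Polynomial.Chebyshev.U ℝ ((n : ℤ) - 1))).eval c
      = -(n : ℝ) * (-1 : ℝ) ^ k / (1 - c ^ 2) := by
    have h := congrArg (Polynomial.eval c) (Polynomial.Chebyshev.add_one_mul_T_eq_poly_in_U (R := ℝ) ((n : ℤ) - 1))
    rw [show ((n : ℤ) - 1 + 1) = (n : ℤ) by ring] at h
    simp only [Polynomial.eval_mul, Polynomial.eval_add, Polynomial.eval_sub, Polynomial.eval_one,
      Polynomial.eval_intCast, Polynomial.eval_X, Polynomial.eval_pow] at h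
    rw [hU, ← chebT, hT] at h
    push_cast at h
    field_simp
    linarith [h]
  have hp2 : (derivative (derivative (chebT n))).eval c
      = -(n : ℝ) ^ 2 * (-1 : ℝ) ^ k / (1 - c ^ 2) := by
    rw [hdT, derivative_mul]
    simp only [Polynomial.eval_add, Polynomial.eval_mul, Polynomial.eval_intCast]
    rw [hU, hU']
    have h0 : (derivative (((n : ℤ) : ℝ[X]))).eval c = 0 := by simp
    rw [h0]
    push_cast
    ring
  -- derivative of f₁ at c
  have hh1 := (chebT n).hasDerivAt c
  have hh2 := (derivative (chebT n)).hasDerivAt c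
  have hh3 : HasDerivAt (fun x : ℝ => (x + 2) / (n : ℝ) ^ 2) (1 / (n : ℝ) ^ 2) c := by
    simpa using ((hasDerivAt_id c).add_const 2).div_const ((n : ℝ) ^ 2)
  have hd1 : HasDerivAt (f₁ n)
      ((derivative (chebT n)).eval c -
        (1 / (n : ℝ) ^ 2 * (derivative (chebT n)).eval c +
          (c + 2) / (n : ℝ) ^ 2 * (derivative (derivative (chebT n))).eval c)) c := by
    have := (hh1.add_const 2).sub (hh3.mul hh2)
    exact this
  have hderiv1 : deriv (f₁ n) c = (-1 : ℝ) ^ k * (c + 2) / (1 - c ^ 2) := by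
    rw [hd1.deriv, hp1, hp2]
    field_simp
    ring
  -- derivative of f₃ at c
  have hh4 : HasDerivAt (fun x : ℝ => 1 - x) (-1 : ℝ) c := by
    simpa using (hasDerivAt_id c).const_sub 1
  have hh5 : HasDerivAt (fun x : ℝ => (n : ℝ) ^ 2 - (derivative (chebT n)).eval x)
      (0 - (derivative (derivative (chebT n))).eval c) c := (hasDerivAt_const c _).sub hh2
  have hh4' : HasDerivAt (fun x : ℝ => 1 / (n : ℝ) ^ 2 * (1 - x)) (1 / (n : ℝ) ^ 2 * (-1)) c :=
    hh4.const_mul (1 / (n : ℝ) ^ 2)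
  have hd3 : HasDerivAt (f₃ n)
      (1 / (n : ℝ) ^ 2 * (-1) * ((n : ℝ) ^ 2 - (derivative (chebT n)).eval c) +
        1 / (n : ℝ) ^ 2 * (1 - c) * (0 - (derivative (derivative (chebT n))).eval c)) c := by
    have := hh4'.mul hh5
    exact this
  have hderiv3 : deriv (f₃ n) c = (-1 : ℝ) ^ k / (1 + c) - 1 := by
    rw [hd3.deriv, hp1, hp2]
    have hfact : 1 - c ^ 2 = (1 + c) * (1 - c) := by ring
    field_simp
    ring
  have hf1c : f₁ n c = (-1 : ℝ) ^ k + 2 := by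
    rw [f₁, hT, hp1]; ring
  have hf3c : f₃ n c = 1 - c := by
    rw [f₃, hp1]; field_simp; ring
  refine ⟨hderiv1, hderiv3, ?_, ?_⟩
  · intro x hk
    have hpow : (-1 : ℝ) ^ k = 1 := hk.neg_one_pow
    constructor
    · rw [Lfun, hderiv1, hf1c, hpow]
      field_simp
      ring
    · rw [Lfun, hderiv3, hf3c, hpow]
      field_simp
      ring
  · intro x hk
    have hpow : (-1 : ℝ) ^ k = -1 := hk.neg_one_pow
    constructor
    · rw [Lfun, hderiv1, hf1c, hpow]
      field_simp
      ring
    · rw [Lfun, hderiv3, hf3c, hpow]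
      field_simp
      ring
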